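/- Let G be a graph and P a partition of V(G) into parts inducing connected subgraphs with cost(P) ≤ k. If K is a clique of G with |K| = k+1 such that the vertices of K have no neighbors outside K except possibly through one designated attachment set, then some part of P is a (nonempty) subset of K. -/

import Mathlib

variable {V W : Type*}

/-- Contraction of a graph by a partition (setoid): two classes are adjacent
iff they are distinct and joined by an edge of `G`. -/
def contractQ (G : SimpleGraph V) (s : Setoid V) : SimpleGraph (Quotient s) where
  Adj x y := x ≠ y ∧ ∃ a b : V, Quotient.mk s a = x ∧ Quotient.mk s b = y ∧ G.Adj a b
  symm := by
    constructor
    rintro x y ⟨hne, a, b, ha, hb, hab⟩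
    exact ⟨hne.symm, b, a, hb, ha, hab.symm⟩
  loopless := by
    constructor
    rintro x ⟨hne, -⟩
    exact hne rfl

/-- The partition of the vertices induced by contracting a set `F` of edges of `G`. -/
def edgeSetoid (G : SimpleGraph V) (F : Set (Sym2 V)) : Setoid V :=
  Relation.EqvGen.setoid (fun a b => G.Adj a b ∧ s(a, b) ∈ F)

/-- The graph `G/F` obtained from `G` by contracting the edges in `F`. -/
def contractE (G : SimpleGraph V) (F : Set (Sym2 V)) :
    SimpleGraph (Quotient (edgeSetoid G F)) := contractQ G (edgeSetoid G F)

/-- `G` contains an induced copy of `H`. -/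
def HasInducedCopy (H : SimpleGraph W) (G : SimpleGraph V) : Prop :=
  ∃ f : W ↪ V, ∀ a b : W, H.Adj a b ↔ G.Adj (f a) (f b)

/-- `G` can be turned into an `H`-free graph by contracting at most `k` of its edges. -/
def ContractsToFree (G : SimpleGraph V) (k : ℕ) (H : SimpleGraph W) : Prop :=
  ∃ F : Finset (Sym2 V), ↑F ⊆ G.edgeSet ∧ F.card ≤ k ∧
    ¬ HasInducedCopy H (contractE G (↑F : Set (Sym2 V)))

/-- The cost of the partition given by a setoid: the sum over classes of (size - 1). -/
noncomputable def setoidCost (s : Setoid V) : ℕ :=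
  ∑ᶠ c : Quotient s, ({v : V | Quotient.mk s v = c}.ncard - 1)

/-- If `P` is a partition into connected parts with cost at most `k`, and
`K` is a clique of size `k+1` whose vertices have no neighbors outside `K` except through
one designated attachment set, then some part of `P` is a subset of `K`. -/
theorem clique_contains_part {V : Type*} [Fintype V] (G : SimpleGraph V) (k : ℕ)
    (s : Setoid V)
    (hconn : ∀ v : V, (G.induce {u | s.r u v}).Connected)
    (hcost : setoidCost s ≤ k)
    (K : Finset V) (hK : K.card = k + 1) (hclique : G.IsClique (↑K : Set V))
    (A : Set V) (hattach : ∀ v ∈ K, ∀ u : V, G.Adj v u → u ∈ K ∨ u ∈ A) :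
    ∃ v ∈ K, {u : V | s.r u v} ⊆ (↑K : Set V) := by
  classical
  by_contra h
  push_neg at h
  haveI : Fintype (Quotient s) := Fintype.ofFinite _
  have hsum : setoidCost s = ∑ c : Quotient s, ({v : V | Quotient.mk s v = c}.ncard - 1) :=
    finsum_eq_sum_of_fintype _
  have hfib : K.card = ∑ c : Quotient s, (K.filter (fun v => Quotient.mk s v = c)).card :=
    Finset.card_eq_sum_card_fiberwise (fun v _ => Finset.mem_univ _)
  have hle : ∀ c : Quotient s,
      (K.filter (fun v => Quotient.mk s v = c)).card ≤ ({v : V | Quotient.mk s v = c}.ncard - 1) := by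
    intro c
    by_cases hne : (K.filter (fun v => Quotient.mk s v = c)).Nonempty
    · obtain ⟨v, hv⟩ := hne
      rw [Finset.mem_filter] at hv
      obtain ⟨u, hu, huK⟩ := Set.not_subset.mp (h v hv.1)
      have huc : Quotient.mk s u = c := by
        rw [show Quotient.mk s u = Quotient.mk s v from Quotient.sound hu]
        exact hv.2
      have hsub : insert u (↑(K.filter (fun v => Quotient.mk s v = c)) : Set V)
          ⊆ {v : V | Quotient.mk s v = c} := by
        rintro x (rfl | hx)
        · exact huc
        · have := Finset.mem_coe.mp hx
          exact (Finset.mem_filter.mp this).2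
      have h1 : (insert u (↑(K.filter (fun v => Quotient.mk s v = c)) : Set V)).ncard
          ≤ {v : V | Quotient.mk s v = c}.ncard := Set.ncard_le_ncard hsub (Set.toFinite _)
      have hnotm : u ∉ (↑(K.filter (fun v => Quotient.mk s v = c)) : Set V) := by
        simp only [Finset.coe_filter, Set.mem_setOf_eq]
        exact fun hx => huK hx.1
      rw [Set.ncard_insert_of_notMem hnotm, Set.ncard_coe_finset] at h1
      omega
    · simp [Finset.not_nonempty_iff_eq_empty.mp hne]
  have hfin : k + 1 ≤ setoidCost s := by
    rw [hsum, ← hK, hfib]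
    exact Finset.sum_le_sum (fun c _ => hle c)
  omega
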